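/- Fix an integer k ≥ 1 and a real α > 0, and let L = a^k − α^k I. For every finitely supported ψ ∈ ℓ²(ℕ,ℂ), one has ‖L†ψ‖² − ‖Lψ‖² = ⟨ψ|M|ψ⟩ ≥ k!·‖ψ‖², where M is the diagonal operator M|n⟩ = ((n+1)⋯(n+k) − n(n−1)⋯(n−k+1))|n⟩. In particular L†L ≤ LL† as quadratic forms on finitely supported vectors. -/

import Mathlib

noncomputable section

open scoped BigOperators ComplexConjugate

local notation "⟪" x ", " y "⟫" => @inner ℂ _ _ x y

/-- The Hilbert space `H = ℓ²(ℕ, ℂ)` of the quantum harmonic oscillator. -/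
abbrev H : Type := lp (fun _ : ℕ => ℂ) 2

/-- The Fock (number) basis vector `|n⟩`. -/
def fock (n : ℕ) : H := lp.single 2 n 1

/-- Coefficientwise action of the annihilation operator `a`:
`(aψ)_n = √(n+1) ψ_{n+1}`. -/
def acoef (ψ : ℕ → ℂ) : ℕ → ℂ := fun n => (Real.sqrt (n + 1) : ℝ) * ψ (n + 1)

/-- Coefficientwise action of the creation operator `a†`:
`(a†ψ)_n = √n ψ_{n-1}` for `n ≥ 1`, and `(a†ψ)_0 = 0`. -/
def adcoef (ψ : ℕ → ℂ) : ℕ → ℂ :=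
  fun n => if n = 0 then 0 else (Real.sqrt n : ℝ) * ψ (n - 1)

/-- Coefficientwise action of `L = a^k − α^k I`. -/
def Lcoef (k : ℕ) (α : ℝ) (ψ : ℕ → ℂ) : ℕ → ℂ :=
  fun n => acoef^[k] ψ n - (α : ℂ) ^ k * ψ n

/-- Coefficientwise action of `L† = (a†)^k − α^k I`. -/
def Ldcoef (k : ℕ) (α : ℝ) (ψ : ℕ → ℂ) : ℕ → ℂ :=
  fun n => adcoef^[k] ψ n - (α : ℂ) ^ k * ψ n

/-- Coefficientwise action of `L†L`. -/
def LdLcoef (k : ℕ) (α : ℝ) (ψ : ℕ → ℂ) : ℕ → ℂ := Ldcoef k α (Lcoef k α ψ)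

/-- `ψ ∈ H_j`, the domain `{ψ : ∑ n^j |ψ_n|² < ∞}` (inside `ℓ²`). -/
def inHdom (j : ℕ) (ψ : ℕ → ℂ) : Prop :=
  Summable (fun n => ‖ψ n‖ ^ 2) ∧ Summable (fun n : ℕ => (n : ℝ) ^ j * ‖ψ n‖ ^ 2)

/-- Falling factorial `n(n−1)⋯(n−k+1)` (zero when `n < k`). -/
def fallR (k n : ℕ) : ℝ := ∏ j ∈ Finset.range k, ((n : ℝ) - j)

/-- Rising product `(n+1)(n+2)⋯(n+k)`. -/
def riseR (k n : ℕ) : ℝ := ∏ j ∈ Finset.Icc 1 k, ((n : ℝ) + j)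

/-- Eigenvalue `m(n)` of the commutator `M = [a^k, (a†)^k]` on `|n⟩`. -/
def mval (k n : ℕ) : ℝ := riseR k n - fallR k n

/-- The vector `L†|m⟩ = √((m+1)⋯(m+k)) |m+k⟩ − α^k |m⟩`. -/
def ldagFock (k : ℕ) (α : ℝ) (m : ℕ) : H :=
  ((Real.sqrt (riseR k m) : ℝ) : ℂ) • fock (m + k) - ((α : ℂ) ^ k) • fock m

/-- The vector `L†L|m⟩`. -/
def ldlFock (k : ℕ) (α : ℝ) (m : ℕ) : H :=
  ((fallR k m + α ^ (2 * k) : ℝ) : ℂ) • fock m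
    - ((α ^ k * Real.sqrt (fallR k m) : ℝ) : ℂ) • fock (m - k)
    - ((α ^ k * Real.sqrt (riseR k m) : ℝ) : ℂ) • fock (m + k)

/-- A bounded operator is a Hermitian trace-class operator (member of `K¹(H)`) when it is
self-adjoint and admits a spectral decomposition `T = ∑ c_μ |e_μ⟩⟨e_μ|` along a Hilbert basis
with absolutely summable real eigenvalues. -/
def IsHermitianTraceClass (T : H →L[ℂ] H) : Prop :=
  IsSelfAdjoint T ∧
    ∃ (e : HilbertBasis ℕ ℂ H) (c : ℕ → ℝ),
      Summable (fun μ => |c μ|) ∧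
      ∀ x : H, T x = ∑' μ, ((c μ : ℂ) * ⟪e μ, x⟫) • e μ

/-- Trace norm `tr|T| = ∑ |c_μ|` of a Hermitian trace-class operator. -/
def traceNorm (T : H →L[ℂ] H) : ℝ :=
  sInf {s | ∃ (e : HilbertBasis ℕ ℂ H) (c : ℕ → ℝ),
    Summable (fun μ => |c μ|) ∧
    (∀ x : H, T x = ∑' μ, ((c μ : ℂ) * ⟪e μ, x⟫) • e μ) ∧
    s = ∑' μ, |c μ|}

/-- Trace of an operator, computed in the Fock basis. -/
def traceOf (T : H →L[ℂ] H) : ℝ := ∑' n, (⟪fock n, T (fock n)⟫).re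

/-- Positive semidefinite bounded operator. -/
def IsPosSemidef (T : H →L[ℂ] H) : Prop :=
  IsSelfAdjoint T ∧ ∀ x : H, 0 ≤ (⟪x, T x⟫).re

/-- Loewner order on Hermitian operators. -/
def opLE (A B : H →L[ℂ] H) : Prop := IsPosSemidef (B - A)

/-- `(g, d)` is a spectral decomposition of `L†L`: a Hilbert basis of eigenvectors `g_μ`,
lying in the domain `H_{2k}`, with nonnegative eigenvalues `d_μ`. -/
def IsSpectralBasis (k : ℕ) (α : ℝ) (g : HilbertBasis ℕ ℂ H) (d : ℕ → ℝ) : Prop :=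
  (∀ μ, 0 ≤ d μ) ∧
    ∀ μ, inHdom (2 * k) (g μ) ∧
      ∀ n, LdLcoef k α (g μ) n = (d μ : ℂ) * (g μ) n

/-- Matrix entry `⟨g_μ| SρS |g_ν⟩ = √(1+d_μ)√(1+d_ν) ⟨g_μ|ρ|g_ν⟩` of `SρS`
in the eigenbasis `g` of `L†L`, where `S = √(I + L†L)`. -/
def SEntry (g : HilbertBasis ℕ ℂ H) (d : ℕ → ℝ) (ρ : H →L[ℂ] H) (μ ν : ℕ) : ℂ :=
  ((Real.sqrt (1 + d μ) * Real.sqrt (1 + d ν) : ℝ) : ℂ) * ⟪g μ, ρ (g ν)⟫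

/-- Membership in `K_L(H) = {ρ ∈ K¹(H) : tr|SρS| < ∞}`: `ρ` is Hermitian trace class and the
operator with matrix `SρS` is Hermitian trace class. -/
def memKL (g : HilbertBasis ℕ ℂ H) (d : ℕ → ℝ) (ρ : H →L[ℂ] H) : Prop :=
  IsHermitianTraceClass ρ ∧
    ∃ T : H →L[ℂ] H, IsHermitianTraceClass T ∧
      ∀ μ ν, ⟪g μ, T (g ν)⟫ = SEntry g d ρ μ ν

/-- The norm `‖ρ‖_L = tr|SρS|` on `K_L(H)`. -/
def Lnorm (g : HilbertBasis ℕ ℂ H) (d : ℕ → ℝ) (ρ : H →L[ℂ] H) : ℝ :=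
  sInf {s | ∃ T : H →L[ℂ] H, IsHermitianTraceClass T ∧
    (∀ μ ν, ⟪g μ, T (g ν)⟫ = SEntry g d ρ μ ν) ∧ s = traceNorm T}

/-- Fock-basis matrix entry `⟨m| 𝔄(ρ) |n⟩` of
`𝔄(ρ) = (L†Lρ + ρL†L)/2 − LρL†` (weak formulation). -/
def Amat (k : ℕ) (α : ℝ) (ρ : H →L[ℂ] H) (m n : ℕ) : ℂ :=
  (1 / 2 : ℂ) * (⟪ldlFock k α m, ρ (fock n)⟫ + ⟪fock m, ρ (ldlFock k α n)⟫)
    - ⟪ldagFock k α m, ρ (ldagFock k α n)⟫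

/-- `ρ` belongs to the domain of the superoperator `𝔄` on `K_L(H)`, with value `A = 𝔄(ρ)`. -/
def inDomA (k : ℕ) (α : ℝ) (g : HilbertBasis ℕ ℂ H) (d : ℕ → ℝ)
    (ρ A : H →L[ℂ] H) : Prop :=
  memKL g d ρ ∧ memKL g d A ∧ ∀ m n, ⟪fock m, A (fock n)⟫ = Amat k α ρ m n

/-- `(ρ, A)` is a `C¹` trajectory of the Lindblad master equation `dρ/dt = −𝔄(ρ)` in `K_L(H)`:
`ρ(t)` lies in the domain of `𝔄` with `A(t) = 𝔄(ρ(t))`, the derivative of `ρ` in the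
`‖·‖_L`-norm equals `−A(t)`, and `t ↦ A(t)` is `‖·‖_L`-continuous. -/
def IsLindbladTrajectory (k : ℕ) (α : ℝ) (g : HilbertBasis ℕ ℂ H) (d : ℕ → ℝ)
    (ρ A : ℝ → (H →L[ℂ] H)) : Prop :=
  (∀ t, 0 ≤ t → inDomA k α g d (ρ t) (A t)) ∧
  (∀ t, 0 ≤ t → Filter.Tendsto
      (fun h : ℝ => Lnorm g d (((1 / h : ℝ) : ℂ) • (ρ (t + h) - ρ t) + A t))
      (nhdsWithin 0 {h : ℝ | h ≠ 0 ∧ 0 ≤ t + h}) (nhds 0)) ∧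
  (∀ t, 0 ≤ t → Filter.Tendsto (fun s => Lnorm g d (A s - A t))
      (nhdsWithin t (Set.Ici 0)) (nhds 0))

/-- The coherent state amplitude `α_m = α e^{2iπm/k}` for `m = 1, …, k` (indexed by `Fin k`). -/
def catAmp (k : ℕ) (α : ℝ) (m : Fin k) : ℂ :=
  (α : ℂ) * Complex.exp (2 * Real.pi * Complex.I * (m.1 + 1) / k)

/-- Coefficients `e^{−|β|²/2} βⁿ/√(n!)` of the coherent state `|β⟩`. -/
def cohCoeff (β : ℂ) : ℕ → ℂ :=
  fun n => ((Real.exp (-(‖β‖) ^ 2 / 2) : ℝ) : ℂ) * β ^ n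
    / ((Real.sqrt (n.factorial) : ℝ) : ℂ)

open Classical in
/-- The coherent state `|β⟩ ∈ H`. -/
def coh (β : ℂ) : H :=
  if h : Memℓp (cohCoeff β) 2 then (⟨cohCoeff β, h⟩ : H) else 0

/-- The `k`-dimensional subspace `H_{α,k}` spanned by the coherent states `|α_m⟩`. -/
def catSpan (k : ℕ) (α : ℝ) : Submodule ℂ H :=
  Submodule.span ℂ (Set.range fun m : Fin k => coh (catAmp k α m))

/-- The rank-one operator `|m⟩⟨n|`. -/
def ketbra (m n : ℕ) : H →L[ℂ] H := (innerSL ℂ (fock n)).smulRight (fock m)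

/-- Coefficientwise action of `(a†)^k + a^k`. -/
def xcoef (k : ℕ) (ψ : ℕ → ℂ) : ℕ → ℂ :=
  fun n => adcoef^[k] ψ n + acoef^[k] ψ n

/-- Coefficientwise action of the inverse resolvent
`R_λ^{-1} = (I + λ(N(N−1)⋯(N−k+1) + α^{2k}))^{-1}`. -/
def rinvCoeff (k : ℕ) (α l : ℝ) (ψ : ℕ → ℂ) : ℕ → ℂ :=
  fun n => (((1 + l * (fallR k n + α ^ (2 * k)))⁻¹ : ℝ) : ℂ) * ψ n

/-- Diagonal Fock-matrix entry `⟨n| 𝔏_L(ξ) |n⟩` of the Lindblad generator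
`𝔏_L(ξ) = LξL† − ½L†Lξ − ½ξL†L` (weak formulation). -/
def lindDiag (k : ℕ) (α : ℝ) (ξ : H →L[ℂ] H) (n : ℕ) : ℂ :=
  ⟪ldagFock k α n, ξ (ldagFock k α n)⟫
    - (1 / 2 : ℂ) * ⟪ldlFock k α n, ξ (fock n)⟫
    - (1 / 2 : ℂ) * ⟪fock n, ξ (ldlFock k α n)⟫

/-- The (unnormalized) `k`-legged Schrödinger cat state
`v_ℓ = ∑_{m=1}^k e^{2iπℓm/k} |α_m⟩`. -/
def catVec (k : ℕ) (α : ℝ) (l : ℤ) : H :=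
  ∑ m ∈ Finset.Icc 1 k,
    Complex.exp (2 * Real.pi * Complex.I * l * m / k) •
      coh ((α : ℂ) * Complex.exp (2 * Real.pi * Complex.I * m / k))

/-- The vector `(I + λL†L)/2 |m⟩`. -/
def resFock (k : ℕ) (α l : ℝ) (m : ℕ) : H :=
  (1 / 2 : ℂ) • (fock m + ((l : ℝ) : ℂ) • ldlFock k α m)

/-- Weak (matrix-element) formulation of the Sylvester-type equation
`((I+λL†L)/2)ρ + ρ((I+λL†L)/2) = f + rλ LρL†`. -/
def sylvEq (k : ℕ) (α l r : ℝ) (f ρ : H →L[ℂ] H) : Prop :=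
  ∀ m n, ⟪resFock k α l m, ρ (fock n)⟫ + ⟪fock m, ρ (resFock k α l n)⟫
    = ⟪fock m, f (fock n)⟫ + ((r * l : ℝ) : ℂ) * ⟪ldagFock k α m, ρ (ldagFock k α n)⟫

/-- `m(n)` as an integer: `(n+1)(n+2)⋯(n+k) − n(n−1)⋯(n−k+1)`. -/
def mInt (k n : ℕ) : ℤ :=
  (∏ j ∈ Finset.Icc 1 k, ((n : ℤ) + j)) - ∏ j ∈ Finset.range k, ((n : ℤ) - j)


lemma riseR_nonneg (k n : ℕ) : 0 ≤ riseR k n := by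
  apply Finset.prod_nonneg
  intro j hj
  positivity

lemma fallR_eq_zero {k n : ℕ} (h : n < k) : fallR k n = 0 :=
  Finset.prod_eq_zero (Finset.mem_range.mpr h) (by simp)

lemma fallR_nonneg (k n : ℕ) : 0 ≤ fallR k n := by
  rcases le_or_gt k n with h | h
  · apply Finset.prod_nonneg
    intro j hj
    rw [Finset.mem_range] at hj
    have : (j : ℝ) ≤ n := by exact_mod_cast (hj.trans_le h).le
    linarith
  · rw [fallR_eq_zero h]

lemma fallR_succ (k n : ℕ) : fallR (k+1) n = fallR k n * ((n:ℝ) - k) :=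
  Finset.prod_range_succ _ k

lemma riseR_succ (k n : ℕ) : riseR (k+1) n = riseR k n * ((n:ℝ) + (k+1)) := by
  unfold riseR
  rw [Finset.prod_Icc_succ_top (by omega : 1 ≤ k+1)]
  push_cast
  ring

lemma riseR_range (k m : ℕ) : riseR k m = ∏ j ∈ Finset.range k, ((m:ℝ) + 1 + j) := by
  unfold riseR
  rw [← Finset.Ico_add_one_right_eq_Icc, Finset.prod_Ico_eq_prod_range]
  apply Finset.prod_congr rfl
  intro j _
  push_cast
  ring

lemma fallR_add (k m : ℕ) : fallR k (m + k) = riseR k m := by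
  rw [riseR_range]
  unfold fallR
  rw [← Finset.prod_range_reflect]
  apply Finset.prod_congr rfl
  intro j hj
  rw [Finset.mem_range] at hj
  have h1 : (↑(k - 1 - j) : ℝ) = (k:ℝ) - 1 - j := by
    have : k - 1 - j = k - (1 + j) := by omega
    rw [this]
    push_cast [Nat.cast_sub (by omega : 1 + j ≤ k)]
    ring
  rw [h1]
  push_cast
  ring

lemma acoef_iter (k : ℕ) (ψ : ℕ → ℂ) (n : ℕ) :
    acoef^[k] ψ n = ((Real.sqrt (riseR k n) : ℝ) : ℂ) * ψ (n + k) := by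
  induction k generalizing ψ with
  | zero => simp [riseR]
  | succ k ih =>
    rw [Function.iterate_succ_apply, ih]
    simp only [acoef]
    rw [riseR_succ, Real.sqrt_mul (riseR_nonneg k n)]
    have h1 : ((n + k : ℕ) : ℝ) + 1 = (n:ℝ) + (k+1) := by push_cast; ring
    rw [h1]
    have h2 : n + k + 1 = n + (k + 1) := by omega
    rw [h2]
    push_cast
    ring

lemma adcoef_iter (k : ℕ) (ψ : ℕ → ℂ) (n : ℕ) :
    adcoef^[k] ψ n = ((Real.sqrt (fallR k n) : ℝ) : ℂ) * ψ (n - k) := by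
  induction k generalizing ψ with
  | zero => simp [fallR]
  | succ k ih =>
    rw [Function.iterate_succ_apply, ih]
    rcases le_or_gt n k with h | h
    · have h0 : n - k = 0 := by omega
      rw [h0]
      have h2 : fallR (k+1) n = 0 := fallR_eq_zero (by omega)
      rw [h2]
      simp [adcoef]
    · have h1 : adcoef ψ (n - k) = ((Real.sqrt ((n - k : ℕ)) : ℝ) : ℂ) * ψ (n - k - 1) := by
        simp only [adcoef, if_neg (by omega : ¬ n - k = 0)]
      rw [h1, fallR_succ]
      have h2 : (n:ℝ) - k = ((n - k : ℕ) : ℝ) := (Nat.cast_sub h.le).symm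
      rw [h2, Real.sqrt_mul (fallR_nonneg k n)]
      have h3 : n - k - 1 = n - (k + 1) := by omega
      rw [h3]
      push_cast
      ring

lemma mval_ge (k : ℕ) (hk : 1 ≤ k) (n : ℕ) : (k.factorial : ℝ) ≤ mval k n := by
  induction k with
  | zero => omega
  | succ k ih =>
    rcases Nat.eq_zero_or_pos k with rfl | hk'
    · simp [mval, riseR, fallR, Nat.factorial]
    · have h := ih hk'
      have key : mval (k+1) n = mval k n * ((n:ℝ) + (k+1)) + (2*(k:ℝ)+1) * fallR k n := by
        rw [mval, mval, riseR_succ, fallR_succ]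
        ring
      rw [key]
      have h1 : (0:ℝ) ≤ fallR k n := fallR_nonneg k n
      have h2 : (0:ℝ) ≤ (n:ℝ) := Nat.cast_nonneg n
      have h3 : ((k+1).factorial : ℝ) = (k.factorial : ℝ) * ((k:ℝ)+1) := by
        rw [Nat.factorial_succ]
        push_cast
        ring
      have h4 : (k.factorial : ℝ) * ((k:ℝ)+1) ≤ mval k n * ((n:ℝ)+(k+1)) := by
        apply mul_le_mul h (by linarith) (by positivity)
        exact le_trans (Nat.cast_nonneg _) h
      rw [h3]
      nlinarith

lemma norm_sub_sq2 (s t : ℝ) (u v : ℂ) :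
    ‖(s:ℂ) * u - (t:ℂ) * v‖^2 = s*s*‖u‖^2 + t*t*‖v‖^2 - 2*(s*t*(u * conj v).re) := by
  have hz : ∀ z : ℂ, ‖z‖^2 = Complex.normSq z := fun z => by
    rw [Complex.sq_norm]
  simp only [hz]
  simp [Complex.normSq_apply, Complex.mul_re, Complex.mul_im, Complex.sub_re, Complex.sub_im,
    Complex.conj_re, Complex.conj_im, Complex.ofReal_re, Complex.ofReal_im]
  ring

lemma re_mul_conj_comm (z w : ℂ) : (z * conj w).re = (w * conj z).re := by
  simp [Complex.mul_re, Complex.conj_re, Complex.conj_im]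
  ring

/-- For finitely supported `ψ`,
`‖L†ψ‖² − ‖Lψ‖² = ⟨ψ|M|ψ⟩ ≥ k!‖ψ‖²`; in particular `L†L ≤ LL†` as quadratic forms. -/
theorem LdagL_le_LLdag (k : ℕ) (hk : 1 ≤ k) (α : ℝ) (hα : 0 < α)
    (ψ : ℕ → ℂ) (hψ : (Function.support ψ).Finite) :
    ((∑' n, ‖Ldcoef k α ψ n‖ ^ 2) - (∑' n, ‖Lcoef k α ψ n‖ ^ 2)
      = ∑' n, mval k n * ‖ψ n‖ ^ 2) ∧
    ((k.factorial : ℝ) * (∑' n, ‖ψ n‖ ^ 2) ≤ ∑' n, mval k n * ‖ψ n‖ ^ 2) ∧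
    ((∑' n, ‖Lcoef k α ψ n‖ ^ 2) ≤ ∑' n, ‖Ldcoef k α ψ n‖ ^ 2) := by
  classical
  obtain ⟨N, hN⟩ : ∃ N : ℕ, ∀ n, N ≤ n → ψ n = 0 := by
    refine ⟨hψ.toFinset.sup id + 1, fun n hn => ?_⟩
    by_contra h
    have hmem : n ∈ hψ.toFinset := by
      rw [Set.Finite.mem_toFinset, Function.mem_support]; exact h
    have := Finset.le_sup (f := id) hmem
    simp only [id] at this
    omega
  set M := N + k with hM
  have hαk : ((α:ℂ))^k = ((α^k : ℝ) : ℂ) := by push_cast; ring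
  -- pointwise expansions
  have expandLd : ∀ n, ‖Ldcoef k α ψ n‖^2
      = fallR k n * ‖ψ (n-k)‖^2 + (α^k)*(α^k) * ‖ψ n‖^2
        - 2*(Real.sqrt (fallR k n) * (α^k) * (ψ (n-k) * conj (ψ n)).re) := by
    intro n
    simp only [Ldcoef]
    rw [adcoef_iter, hαk, norm_sub_sq2, Real.mul_self_sqrt (fallR_nonneg k n)]
  have expandL : ∀ n, ‖Lcoef k α ψ n‖^2
      = riseR k n * ‖ψ (n+k)‖^2 + (α^k)*(α^k) * ‖ψ n‖^2
        - 2*(Real.sqrt (riseR k n) * (α^k) * (ψ (n+k) * conj (ψ n)).re) := by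
    intro n
    simp only [Lcoef]
    rw [acoef_iter, hαk, norm_sub_sq2, Real.mul_self_sqrt (riseR_nonneg k n)]
  -- tsum → finite sums over range M
  have hψ0 : ∀ n ∉ Finset.range M, ‖ψ n‖^2 = 0 := fun n hn => by
    rw [Finset.mem_range, not_lt] at hn
    rw [hN n (by omega)]; simp
  have hm0 : ∀ n ∉ Finset.range M, mval k n * ‖ψ n‖^2 = 0 := fun n hn => by
    rw [Finset.mem_range, not_lt] at hn
    rw [hN n (by omega)]; simp
  have hL0 : ∀ n ∉ Finset.range M, ‖Lcoef k α ψ n‖^2 = 0 := fun n hn => by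
    rw [Finset.mem_range, not_lt] at hn
    simp only [Lcoef]
    rw [acoef_iter, hN n (by omega), hN (n+k) (by omega)]
    simp
  have hLd0 : ∀ n ∉ Finset.range M, ‖Ldcoef k α ψ n‖^2 = 0 := fun n hn => by
    rw [Finset.mem_range, not_lt] at hn
    simp only [Ldcoef]
    rw [adcoef_iter, hN n (by omega), hN (n-k) (by omega)]
    simp
  have t1 : ∑' n, ‖Ldcoef k α ψ n‖^2 = ∑ n ∈ Finset.range M, ‖Ldcoef k α ψ n‖^2 :=
    tsum_eq_sum hLd0
  have t2 : ∑' n, ‖Lcoef k α ψ n‖^2 = ∑ n ∈ Finset.range M, ‖Lcoef k α ψ n‖^2 :=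
    tsum_eq_sum hL0
  have t3 : ∑' n, mval k n * ‖ψ n‖^2 = ∑ n ∈ Finset.range M, mval k n * ‖ψ n‖^2 :=
    tsum_eq_sum hm0
  have t4 : ∑' n, ‖ψ n‖^2 = ∑ n ∈ Finset.range M, ‖ψ n‖^2 :=
    tsum_eq_sum hψ0
  -- sum expansions
  have hLdsum : ∑ n ∈ Finset.range M, ‖Ldcoef k α ψ n‖^2
      = (∑ n ∈ Finset.range M, fallR k n * ‖ψ (n-k)‖^2)
        + (∑ n ∈ Finset.range M, (α^k)*(α^k) * ‖ψ n‖^2)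
        - (∑ n ∈ Finset.range M, 2*(Real.sqrt (fallR k n) * (α^k) * (ψ (n-k) * conj (ψ n)).re)) := by
    rw [← Finset.sum_add_distrib, ← Finset.sum_sub_distrib]
    exact Finset.sum_congr rfl fun n _ => expandLd n
  have hLsum : ∑ n ∈ Finset.range M, ‖Lcoef k α ψ n‖^2
      = (∑ n ∈ Finset.range M, riseR k n * ‖ψ (n+k)‖^2)
        + (∑ n ∈ Finset.range M, (α^k)*(α^k) * ‖ψ n‖^2)
        - (∑ n ∈ Finset.range M, 2*(Real.sqrt (riseR k n) * (α^k) * (ψ (n+k) * conj (ψ n)).re)) := by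
    rw [← Finset.sum_add_distrib, ← Finset.sum_sub_distrib]
    exact Finset.sum_congr rfl fun n _ => expandL n
  -- shift identities
  have shift1 : ∑ n ∈ Finset.range M, fallR k n * ‖ψ (n-k)‖^2
      = ∑ n ∈ Finset.range M, riseR k n * ‖ψ n‖^2 := by
    have l : ∑ n ∈ Finset.range (k+N), fallR k n * ‖ψ (n-k)‖^2
        = ∑ i ∈ Finset.range N, riseR k i * ‖ψ i‖^2 := by
      rw [Finset.sum_range_add]
      have z1 : ∑ n ∈ Finset.range k, fallR k n * ‖ψ (n-k)‖^2 = 0 :=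
        Finset.sum_eq_zero fun n hn => by
          rw [Finset.mem_range] at hn
          rw [fallR_eq_zero hn, zero_mul]
      rw [z1, zero_add]
      apply Finset.sum_congr rfl
      intro i _
      rw [show k + i - k = i by omega, show k + i = i + k by omega, fallR_add]
    have r : ∑ n ∈ Finset.range (N+k), riseR k n * ‖ψ n‖^2
        = ∑ i ∈ Finset.range N, riseR k i * ‖ψ i‖^2 := by
      rw [Finset.sum_range_add]
      have z1 : ∑ i ∈ Finset.range k, riseR k (N+i) * ‖ψ (N+i)‖^2 = 0 :=
        Finset.sum_eq_zero fun i _ => by rw [hN (N+i) (by omega)]; simp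
      rw [z1, add_zero]
    rw [show M = k + N by omega] at *
    rw [l, show k + N = N + k by omega, r]
  have shift2 : ∑ n ∈ Finset.range M, riseR k n * ‖ψ (n+k)‖^2
      = ∑ n ∈ Finset.range M, fallR k n * ‖ψ n‖^2 := by
    have l : ∑ n ∈ Finset.range (N+k), riseR k n * ‖ψ (n+k)‖^2
        = ∑ i ∈ Finset.range N, riseR k i * ‖ψ (i+k)‖^2 := by
      rw [Finset.sum_range_add]
      have z1 : ∑ i ∈ Finset.range k, riseR k (N+i) * ‖ψ (N+i+k)‖^2 = 0 :=
        Finset.sum_eq_zero fun i _ => by rw [hN (N+i+k) (by omega)]; simp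
      rw [z1, add_zero]
    have r : ∑ n ∈ Finset.range (k+N), fallR k n * ‖ψ n‖^2
        = ∑ i ∈ Finset.range N, riseR k i * ‖ψ (i+k)‖^2 := by
      rw [Finset.sum_range_add]
      have z1 : ∑ n ∈ Finset.range k, fallR k n * ‖ψ n‖^2 = 0 :=
        Finset.sum_eq_zero fun n hn => by
          rw [Finset.mem_range] at hn
          rw [fallR_eq_zero hn, zero_mul]
      rw [z1, zero_add]
      apply Finset.sum_congr rfl
      intro i _
      rw [show k + i = i + k by omega, fallR_add]
    rw [show M = N + k by omega, l, show N + k = k + N by omega, r]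
  have shift3 : ∑ n ∈ Finset.range M, 2*(Real.sqrt (fallR k n) * (α^k) * (ψ (n-k) * conj (ψ n)).re)
      = ∑ n ∈ Finset.range M, 2*(Real.sqrt (riseR k n) * (α^k) * (ψ (n+k) * conj (ψ n)).re) := by
    have l : ∑ n ∈ Finset.range (k+N), 2*(Real.sqrt (fallR k n) * (α^k) * (ψ (n-k) * conj (ψ n)).re)
        = ∑ i ∈ Finset.range N, 2*(Real.sqrt (riseR k i) * (α^k) * (ψ i * conj (ψ (i+k))).re) := by
      rw [Finset.sum_range_add]
      have z1 : ∑ n ∈ Finset.range k, 2*(Real.sqrt (fallR k n) * (α^k) * (ψ (n-k) * conj (ψ n)).re) = 0 :=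
        Finset.sum_eq_zero fun n hn => by
          rw [Finset.mem_range] at hn
          rw [fallR_eq_zero hn, Real.sqrt_zero]
          ring
      rw [z1, zero_add]
      apply Finset.sum_congr rfl
      intro i _
      rw [show k + i - k = i by omega, show k + i = i + k by omega, fallR_add]
    have r : ∑ n ∈ Finset.range (N+k), 2*(Real.sqrt (riseR k n) * (α^k) * (ψ (n+k) * conj (ψ n)).re)
        = ∑ i ∈ Finset.range N, 2*(Real.sqrt (riseR k i) * (α^k) * (ψ i * conj (ψ (i+k))).re) := by
      rw [Finset.sum_range_add]
      have z1 : ∑ i ∈ Finset.range k, 2*(Real.sqrt (riseR k (N+i)) * (α^k) * (ψ (N+i+k) * conj (ψ (N+i))).re) = 0 :=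
        Finset.sum_eq_zero fun i _ => by rw [hN (N+i+k) (by omega)]; simp
      rw [z1, add_zero]
      apply Finset.sum_congr rfl
      intro n _
      rw [re_mul_conj_comm, add_comm n k, show k + n = n + k by omega]
    rw [show M = k + N by omega, l, show k + N = N + k by omega, r]
  -- combine
  have key : (∑ n ∈ Finset.range M, ‖Ldcoef k α ψ n‖^2)
      - (∑ n ∈ Finset.range M, ‖Lcoef k α ψ n‖^2)
      = ∑ n ∈ Finset.range M, mval k n * ‖ψ n‖^2 := by
    rw [hLdsum, hLsum, shift1, shift2, shift3]
    rw [show ∀ a b c d : ℝ, (a + b - c) - (d + b - c) = a - d from fun a b c d => by ring]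
    rw [← Finset.sum_sub_distrib]
    apply Finset.sum_congr rfl
    intro n _
    rw [mval]
    ring
  have hsum_nonneg : (0:ℝ) ≤ ∑ n ∈ Finset.range M, ‖ψ n‖^2 :=
    Finset.sum_nonneg fun n _ => by positivity
  have hineq : (k.factorial : ℝ) * (∑ n ∈ Finset.range M, ‖ψ n‖^2)
      ≤ ∑ n ∈ Finset.range M, mval k n * ‖ψ n‖^2 := by
    rw [Finset.mul_sum]
    apply Finset.sum_le_sum
    intro n _
    exact mul_le_mul_of_nonneg_right (mval_ge k hk n) (by positivity)
  refine ⟨by rw [t1, t2, t3]; exact key, by rw [t3, t4]; exact hineq, ?_⟩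
  rw [t1, t2]
  have hfac : (0:ℝ) ≤ (k.factorial : ℝ) := Nat.cast_nonneg _
  nlinarith [key, hineq, hsum_nonneg, mul_nonneg hfac hsum_nonneg]

end
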